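/- Let w(x) = e^x on ℝ with the Lebesgue measure. Then w ∈ WRH_∞(ℝ): there exists a constant C > 0 such that esssup_B w ≤ C ⨍_{2B} w dx for every bounded open interval B = (a−r, a+r). Explicitly, for every a ∈ ℝ and r > 0 one has e^{a+r} / ((1/(4r))(e^{a+2r} − e^{a−2r})) = 4r e^{3r}/(e^{4r} − 1), which is a bounded function of r > 0. On the other hand, for every 1 < p < ∞, w does not belong to RH_p(ℝ): there is no constant C such that (⨍_B w^p dx)^{1/p} ≤ C ⨍_B w dx for every bounded interval B. -/

import Mathlib

open MeasureTheory Metric Set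
open scoped ENNReal

lemma avg_exp_mul' (c a b : ℝ) (hc : c ≠ 0) (hab : a < b) :
    ⨍ x in Set.Ioo a b, Real.exp (x * c) ∂volume =
      (Real.exp (b*c) - Real.exp (a*c)) / ((b - a) * c) := by
  rw [setAverage_eq, Real.volume_real_Ioo_of_le hab.le]
  rw [← integral_Ioc_eq_integral_Ioo, ← intervalIntegral.integral_of_le hab.le,
    intervalIntegral.integral_comp_mul_right Real.exp hc, integral_exp]
  simp only [smul_eq_mul]
  field_simp

lemma avg_exp' (a b : ℝ) (hab : a < b) :
    ⨍ x in Set.Ioo a b, Real.exp x ∂volume = (Real.exp b - Real.exp a) / (b - a) := by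
  have := avg_exp_mul' 1 a b one_ne_zero hab
  simpa using this

/-- The weight `w(x) = e^x` on `ℝ` belongs to `WRH_∞(ℝ)`: `esssup_B w ≤ C ⨍_{2B} w` for all
bounded intervals `B = (a-r, a+r)`; explicitly the ratio equals `4r e^{3r}/(e^{4r}-1)`,
a bounded function of `r > 0`. However, `w ∉ RH_p(ℝ)` for any `1 < p < ∞`. -/
theorem exp_mem_wrhInfty_not_rhp :
    (∃ C : ℝ, 0 < C ∧ ∀ a r : ℝ, 0 < r →
      essSup (fun x => ENNReal.ofReal (Real.exp x))
          (volume.restrict (Set.Ioo (a - r) (a + r))) ≤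
        ENNReal.ofReal (C * ⨍ x in Set.Ioo (a - 2 * r) (a + 2 * r), Real.exp x ∂volume)) ∧
    (∀ a r : ℝ, 0 < r →
      Real.exp (a + r) /
          ((1 / (4 * r)) * (Real.exp (a + 2 * r) - Real.exp (a - 2 * r))) =
        4 * r * Real.exp (3 * r) / (Real.exp (4 * r) - 1)) ∧
    (∃ M : ℝ, ∀ r : ℝ, 0 < r →
      4 * r * Real.exp (3 * r) / (Real.exp (4 * r) - 1) ≤ M) ∧
    (∀ p : ℝ, 1 < p →
      ¬ ∃ C : ℝ, ∀ a r : ℝ, 0 < r →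
        (⨍ x in Set.Ioo (a - r) (a + r), Real.exp x ^ p ∂volume) ^ (1 / p) ≤
          C * ⨍ x in Set.Ioo (a - r) (a + r), Real.exp x ∂volume) := by
  refine ⟨⟨4, by norm_num, ?_⟩, ?_, ⟨4, ?_⟩, ?_⟩
  · -- Part 1: WRH_∞ with constant C = 4
    intro a r hr
    have havg : ⨍ x in Set.Ioo (a - 2*r) (a + 2*r), Real.exp x ∂volume
        = (Real.exp (a + 2*r) - Real.exp (a - 2*r)) / (4*r) := by
      rw [avg_exp' _ _ (by linarith)]
      norm_num
      ring_nf
    refine le_trans (essSup_le_of_ae_le (ENNReal.ofReal (Real.exp (a + r))) ?_) ?_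
    · filter_upwards [ae_restrict_mem measurableSet_Ioo] with x hx
      exact ENNReal.ofReal_le_ofReal (Real.exp_le_exp.2 hx.2.le)
    · apply ENNReal.ofReal_le_ofReal
      rw [havg]
      have h1 : Real.exp (a+r) * (1+r) ≤ Real.exp (a+2*r) := by
        have hx : Real.exp (a+2*r) = Real.exp (a+r) * Real.exp r := by
          rw [← Real.exp_add]; ring_nf
        rw [hx]
        nlinarith [Real.add_one_le_exp r, Real.exp_pos (a+r)]
      have h2 : Real.exp (a-2*r) ≤ Real.exp (a+r) := Real.exp_le_exp.2 (by linarith)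
      rw [show (4:ℝ) * ((Real.exp (a + 2*r) - Real.exp (a - 2*r)) / (4*r))
          = (Real.exp (a + 2*r) - Real.exp (a - 2*r)) / r by field_simp,
        le_div_iff₀ hr]
      nlinarith [Real.exp_pos (a+r)]
  · -- Part 2: the explicit ratio computation
    intro a r hr
    have hE := Real.exp_pos r
    have hEa := Real.exp_pos a
    have hE1 : (1:ℝ) < Real.exp r := Real.one_lt_exp_iff.2 hr
    have e1 : Real.exp (a + r) = Real.exp a * Real.exp r := Real.exp_add a r
    have e2 : Real.exp (a + 2*r) = Real.exp a * Real.exp r ^ 2 := by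
      rw [Real.exp_add, show (2:ℝ)*r = r + r by ring, Real.exp_add, sq]
    have e3 : Real.exp (a - 2*r) = Real.exp a / Real.exp r ^ 2 := by
      rw [Real.exp_sub, show (2:ℝ)*r = r + r by ring, Real.exp_add, sq]
    have e4 : Real.exp (3*r) = Real.exp r ^ 3 := by
      rw [show (3:ℝ)*r = r + (r + r) by ring, Real.exp_add, Real.exp_add]; ring
    have e5 : Real.exp (4*r) = Real.exp r ^ 4 := by
      rw [show (4:ℝ)*r = r + (r + (r + r)) by ring, Real.exp_add, Real.exp_add,
        Real.exp_add]; ring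
    rw [e1, e2, e3, e4, e5]
    have hE4 : (1:ℝ) < Real.exp r ^ 4 := one_lt_pow₀ hE1 (by norm_num)
    have h4 : Real.exp r ^ 4 - 1 ≠ 0 := by nlinarith
    have hD1 : (1/(4*r)) * (Real.exp a * Real.exp r ^ 2 - Real.exp a / Real.exp r ^ 2)
        = Real.exp a * (Real.exp r ^ 4 - 1) / (4*r*Real.exp r ^ 2) := by
      field_simp
    rw [hD1]
    rw [div_div_eq_mul_div, div_eq_div_iff (by positivity) (by nlinarith)]
    ring
  · -- Part 3: the ratio is bounded by 4
    intro r hr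
    have hB := Real.exp_pos (3*r)
    have hA : 1 + r ≤ Real.exp r := by linarith [Real.add_one_le_exp r]
    have hB1 : (1:ℝ) ≤ Real.exp (3*r) := Real.one_le_exp (by linarith)
    have h4 : Real.exp (4*r) = Real.exp r * Real.exp (3*r) := by
      rw [← Real.exp_add]; ring_nf
    have hpos : 0 < Real.exp (4*r) - 1 := by
      rw [h4]; nlinarith
    rw [div_le_iff₀ hpos, h4]
    nlinarith
  · -- Part 4: failure of RH_p for every p > 1
    intro p hp
    have hp0 : 0 < p := by linarith
    rintro ⟨C, hC⟩
    have key : ∀ t : ℝ, 0 < t →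
        ((Real.exp (t*p) - 1) / (t*p)) ^ (1/p) ≤ C * ((Real.exp t - 1) / t) := by
      intro t ht
      have h := hC (t/2) (t/2) (by linarith)
      have hs : Set.Ioo (t/2 - t/2) (t/2 + t/2) = Set.Ioo 0 t := by
        norm_num
      rw [hs] at h
      have hap : ∀ x : ℝ, Real.exp x ^ p = Real.exp (x * p) := fun x => (Real.exp_mul x p).symm
      simp only [hap] at h
      rw [avg_exp_mul' p 0 t (by positivity) ht, avg_exp' 0 t ht] at h
      simpa using h
    have hExp2 : (1:ℝ) < Real.exp (1*p) := Real.one_lt_exp_iff.2 (by linarith)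
    have hC0 : 0 < C := by
      have h1 := key 1 one_pos
      have hXpos : 0 < ((Real.exp (1*p) - 1) / (1*p)) ^ (1/p) :=
        Real.rpow_pos_of_pos (div_pos (by linarith) (by linarith)) _
      have hE1 : (1:ℝ) < Real.exp 1 := Real.one_lt_exp_iff.2 one_pos
      have hEpos : 0 < (Real.exp 1 - 1) / 1 := div_pos (by linarith) one_pos
      nlinarith
    set K : ℝ := 2 * p * C ^ p with hK
    have hCp : 0 < C ^ p := Real.rpow_pos_of_pos hC0 p
    have hKpos : 0 < K := by positivity
    set t : ℝ := max 1 ((K + 1) ^ (p - 1)⁻¹) with htdef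
    have ht1 : (1:ℝ) ≤ t := le_max_left _ _
    have ht : 0 < t := lt_of_lt_of_le one_pos ht1
    have htK : K + 1 ≤ t ^ (p - 1) := by
      calc K + 1 = ((K + 1) ^ (p - 1)⁻¹) ^ (p - 1) := by
            rw [Real.rpow_inv_rpow (by positivity)
              (by intro h; rw [sub_eq_zero] at h; linarith)]
        _ ≤ t ^ (p - 1) :=
            Real.rpow_le_rpow (by positivity) (le_max_right _ _) (by linarith)
    have htp1 : 1 ≤ t * p := by nlinarith
    have hE2 : 2 ≤ Real.exp (t * p) := by
      have := Real.add_one_le_exp (t * p)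
      linarith
    have hEt : 0 < Real.exp (t*p) := Real.exp_pos _
    have h1 := key t ht
    have h2 : ((Real.exp (t*p) - 1) / (t*p)) ^ (1/p) ≤ C * (Real.exp t / t) := by
      refine h1.trans (mul_le_mul_of_nonneg_left ?_ hC0.le)
      gcongr
      linarith [Real.exp_pos t]
    have h3 : (Real.exp (t*p) - 1) / (t*p) ≤ (C * (Real.exp t / t)) ^ p := by
      have h := Real.rpow_le_rpow (Real.rpow_nonneg (div_nonneg (by linarith) (by positivity)) _)
        h2 hp0.le
      rwa [← Real.rpow_mul (div_nonneg (by linarith) (by positivity)),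
        one_div_mul_cancel hp0.ne', Real.rpow_one] at h
    have hrhs : (C * (Real.exp t / t)) ^ p = C^p * Real.exp (t*p) / t^p := by
      rw [Real.mul_rpow hC0.le (by positivity), Real.div_rpow (Real.exp_pos t).le ht.le,
        ← Real.exp_mul]
      ring
    have hTpos : 0 < t ^ p := Real.rpow_pos_of_pos ht p
    have h4 : Real.exp (t*p) / (2*(t*p)) ≤ C^p * Real.exp (t*p) / t^p := by
      refine le_trans ?_ (hrhs ▸ h3)
      rw [div_le_div_iff₀ (by positivity) (by positivity)]
      nlinarith
    have h5 : t ^ p ≤ 2*t*p*C^p := by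
      rw [div_le_div_iff₀ (by positivity) hTpos] at h4
      nlinarith
    have hTp : t ^ p = t ^ (p-1) * t := by
      rw [← Real.rpow_add_one ht.ne' (p-1)]
      norm_num
    nlinarith [mul_le_mul_of_nonneg_right htK ht.le]
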